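/- Every star forest on n vertices contains two edge-disjoint isomorphic subgraphs, each having at least (n-2)/4 edges. -/

import Mathlib

lemma gadget {α : Type*} [DecidableEq α] (F : Finset α) :
    ∃ (A B : Finset α) (σ : α → α),
      A ⊆ F ∧ B ⊆ F ∧ Disjoint A B ∧ A.card = F.card / 2 ∧
      (∀ a ∈ A, σ a ∈ B) ∧ (∀ b ∈ B, σ b ∈ A) ∧
      (∀ x ∈ A ∪ B, σ (σ x) = x) ∧ (∀ x ∉ A ∪ B, σ x = x) := by
  suffices h : ∀ n (F : Finset α), F.card ≤ n → ∃ (A B : Finset α) (σ : α → α),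
      A ⊆ F ∧ B ⊆ F ∧ Disjoint A B ∧ A.card = F.card / 2 ∧
      (∀ a ∈ A, σ a ∈ B) ∧ (∀ b ∈ B, σ b ∈ A) ∧
      (∀ x ∈ A ∪ B, σ (σ x) = x) ∧ (∀ x ∉ A ∪ B, σ x = x) from h F.card F le_rfl
  intro n
  induction n with
  | zero =>
    intro F hF
    refine ⟨∅, ∅, id, by simp, by simp, by simp, by simp; omega, by simp, by simp, by simp, by simp⟩
  | succ n ih =>
    intro F hF
    by_cases hc : F.card ≤ 1
    · refine ⟨∅, ∅, id, by simp, by simp, by simp, by simp; omega, by simp, by simp, by simp, by simp⟩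
    push_neg at hc
    obtain ⟨a, ha⟩ := Finset.card_pos.mp (show 0 < F.card by omega)
    have hea : (F.erase a).card = F.card - 1 := Finset.card_erase_of_mem ha
    obtain ⟨b, hb⟩ := Finset.card_pos.mp (show 0 < (F.erase a).card by omega)
    have hba : b ≠ a := Finset.ne_of_mem_erase hb
    set F' := (F.erase a).erase b with hF'
    have hF'card : F'.card = F.card - 2 := by
      rw [hF', Finset.card_erase_of_mem hb, hea]; omega
    obtain ⟨A', B', σ', hA'F, hB'F, hdisj, hcard, hAB, hBA, hinv, hfix⟩ :=
      ih F' (by omega)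
    have haF' : a ∉ F' := by simp [hF']
    have hbF' : b ∉ F' := by simp [hF']
    have haA' : a ∉ A' := fun h => haF' (hA'F h)
    have haB' : a ∉ B' := fun h => haF' (hB'F h)
    have hbA' : b ∉ A' := fun h => hbF' (hA'F h)
    have hbB' : b ∉ B' := fun h => hbF' (hB'F h)
    have hF'sub : F' ⊆ F := (Finset.erase_subset _ _).trans (Finset.erase_subset _ _)
    refine ⟨insert a A', insert b B', fun x => if x = a then b else if x = b then a else σ' x,
      ?_, ?_, ?_, ?_, ?_, ?_, ?_, ?_⟩
    · exact Finset.insert_subset ha (hA'F.trans hF'sub)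
    · exact Finset.insert_subset (Finset.mem_of_mem_erase hb) (hB'F.trans hF'sub)
    · simp only [Finset.disjoint_insert_left, Finset.disjoint_insert_right, Finset.mem_insert,
        not_or]
      exact ⟨⟨hba, hbA'⟩, haB', hdisj⟩
    · rw [Finset.card_insert_of_notMem haA', hcard, hF'card]; omega
    · intro x hx
      rcases Finset.mem_insert.mp hx with rfl | hx
      · simp
      · have hxa : x ≠ a := fun h => haA' (h ▸ hx)
        have hxb : x ≠ b := fun h => hbA' (h ▸ hx)
        simp only [hxa, hxb, if_false]
        exact Finset.mem_insert_of_mem (hAB x hx)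
    · intro x hx
      rcases Finset.mem_insert.mp hx with rfl | hx
      · simp [hba]
      · have hxa : x ≠ a := fun h => haB' (h ▸ hx)
        have hxb : x ≠ b := fun h => hbB' (h ▸ hx)
        simp only [hxa, hxb, if_false]
        exact Finset.mem_insert_of_mem (hBA x hx)
    · intro x hx
      rcases Finset.mem_union.mp hx with hx | hx <;> rcases Finset.mem_insert.mp hx with rfl | hx
      · simp [hba]
      · have hxa : x ≠ a := fun h => haA' (h ▸ hx)
        have hxb : x ≠ b := fun h => hbA' (h ▸ hx)
        have h1 : σ' x ∈ B' := hAB x hx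
        have h2a : σ' x ≠ a := fun h => haB' (h ▸ h1)
        have h2b : σ' x ≠ b := fun h => hbB' (h ▸ h1)
        simp only [hxa, hxb, h2a, h2b, if_false]
        exact hinv x (Finset.mem_union_left _ hx)
      · simp [hba]
      · have hxa : x ≠ a := fun h => haB' (h ▸ hx)
        have hxb : x ≠ b := fun h => hbB' (h ▸ hx)
        have h1 : σ' x ∈ A' := hBA x hx
        have h2a : σ' x ≠ a := fun h => haA' (h ▸ h1)
        have h2b : σ' x ≠ b := fun h => hbA' (h ▸ h1)
        simp only [hxa, hxb, h2a, h2b, if_false]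
        exact hinv x (Finset.mem_union_right _ hx)
    · intro x hx
      simp only [Finset.mem_union, Finset.mem_insert] at hx
      push_neg at hx
      simp only [hx.1.1, hx.2.1, if_false]
      exact hfix x (by simp [hx.1.2, hx.2.2])

theorem stmt_3 {V : Type*} [Fintype V] (G : SimpleGraph V)
    (h1 : ∀ v, (G.neighborSet v).Nonempty)
    (h2 : ∀ u v, G.Adj u v → (G.neighborSet u).ncard = 1 ∨ (G.neighborSet v).ncard = 1) :
    ∃ H₁ H₂ : SimpleGraph V, H₁ ≤ G ∧ H₂ ≤ G ∧
      Disjoint H₁.edgeSet H₂.edgeSet ∧ Nonempty (H₁ ≃g H₂) ∧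
      ((Fintype.card V : ℝ) - 2) / 4 ≤ H₁.edgeSet.ncard ∧
      ((Fintype.card V : ℝ) - 2) / 4 ≤ H₂.edgeSet.ncard := by
  classical
  letI : LinearOrder V := LinearOrder.lift' (Fintype.equivFin V) (Fintype.equivFin V).injective
  set dg : V → ℕ := fun v => (G.neighborSet v).ncard with hdgdef
  have dg_pos : ∀ v, 1 ≤ dg v := fun v =>
    (Set.ncard_pos (G.neighborSet v).toFinite).mpr (h1 v)
  set nb : V → V := fun v => (h1 v).some with hnbdef
  have adj_nb : ∀ v, G.Adj v (nb v) := fun v => (h1 v).some_mem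
  have nb_ne : ∀ v, nb v ≠ v := fun v => (adj_nb v).ne'
  have nb_uniq : ∀ {v u : V}, dg v = 1 → G.Adj v u → u = nb v := by
    intro v u hv hadj
    obtain ⟨a, ha⟩ := Set.ncard_eq_one.mp hv
    have h1' : u ∈ G.neighborSet v := hadj
    have h2' : nb v ∈ G.neighborSet v := adj_nb v
    rw [ha] at h1' h2'
    rw [Set.mem_singleton_iff.mp h1', Set.mem_singleton_iff.mp h2']
  have leaf_of_adj : ∀ {u v : V}, G.Adj u v → 2 ≤ dg u → dg v = 1 := by
    intro u v hadj hu
    rcases h2 u v hadj with h | h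
    · have hh : dg u = 1 := h
      omega
    · exact h
  have nb_nb : ∀ {v : V}, dg (nb v) = 1 → nb (nb v) = v := fun {v} h =>
    (nb_uniq h (adj_nb v).symm).symm
  set Lf : V → Finset V := fun c => Finset.univ.filter (fun v => G.Adj c v) with hLfdef
  have mem_Lf : ∀ {c v : V}, v ∈ Lf c ↔ G.Adj c v := by
    intro c v; simp [hLfdef]
  have Lf_card : ∀ c, (Lf c).card = dg c := by
    intro c
    have : G.neighborSet c = ↑(Lf c) := by ext x; simp [hLfdef, SimpleGraph.mem_neighborSet]
    show (Lf c).card = (G.neighborSet c).ncard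
    rw [this, Set.ncard_coe_finset]
  have Lf_leaf : ∀ {c v : V}, 2 ≤ dg c → v ∈ Lf c → dg v = 1 ∧ nb v = c := by
    intro c v hc hv
    have hadj := mem_Lf.mp hv
    have hdv : dg v = 1 := leaf_of_adj hadj hc
    exact ⟨hdv, (nb_uniq hdv hadj.symm).symm⟩
  set C : Finset V := Finset.univ.filter (fun v => 2 ≤ dg v) with hCdef
  have mem_C : ∀ {v : V}, v ∈ C ↔ 2 ≤ dg v := by intro v; simp [hCdef]
  set S1 : Finset V := Finset.univ.filter (fun v => dg v = 1 ∧ dg (nb v) = 1) with hS1def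
  have mem_S1 : ∀ {v : V}, v ∈ S1 ↔ dg v = 1 ∧ dg (nb v) = 1 := by intro v; simp [hS1def]
  set R : Finset V := S1.filter (fun v => v < nb v) with hRdef
  have mem_R : ∀ {v : V}, v ∈ R ↔ dg v = 1 ∧ dg (nb v) = 1 ∧ v < nb v := by
    intro v; simp [hRdef, mem_S1]; tauto
  obtain ⟨A, B, σ, hAsub, hBsub, hABdisj, hAcard, hσA, hσB, hσinv, hσfix⟩ :
      ∃ (A B : Finset V → Finset V) (σ : Finset V → V → V), (∀ F, A F ⊆ F) ∧ (∀ F, B F ⊆ F)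
        ∧ (∀ F, Disjoint (A F) (B F)) ∧ (∀ F, (A F).card = F.card / 2)
        ∧ (∀ F, ∀ a ∈ A F, σ F a ∈ B F) ∧ (∀ F, ∀ b ∈ B F, σ F b ∈ A F)
        ∧ (∀ F, ∀ x ∈ A F ∪ B F, σ F (σ F x) = x) ∧ (∀ F, ∀ x ∉ A F ∪ B F, σ F x = x) := by
    choose A B σ p1 p2 p3 p4 p5 p6 p7 p8 using fun F : Finset V => gadget F
    exact ⟨A, B, σ, p1, p2, p3, p4, p5, p6, p7, p8⟩
  set π : V → V := fun v =>
    if dg v = 1 then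
      if 2 ≤ dg (nb v) then σ (Lf (nb v)) v
      else if v < nb v then σ R v
      else nb (σ R (nb v))
    else v with hπdef
  have pi_center : ∀ {v : V}, 2 ≤ dg v → π v = v := by
    intro v hv
    rw [hπdef]; simp only [if_neg (by omega : ¬ dg v = 1)]
  have pi_leaf : ∀ {v : V}, dg v = 1 → 2 ≤ dg (nb v) → π v = σ (Lf (nb v)) v := by
    intro v hv hnv
    rw [hπdef]; simp only [if_pos hv, if_pos hnv]
  have pi_R : ∀ {v : V}, dg v = 1 → dg (nb v) = 1 → v < nb v → π v = σ R v := by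
    intro v hv hnv hlt
    rw [hπdef]; simp only [if_pos hv, if_neg (by omega : ¬ 2 ≤ dg (nb v)), if_pos hlt]
  have pi_R' : ∀ {v : V}, dg v = 1 → dg (nb v) = 1 → ¬ v < nb v → π v = nb (σ R (nb v)) := by
    intro v hv hnv hlt
    rw [hπdef]; simp only [if_pos hv, if_neg (by omega : ¬ 2 ≤ dg (nb v)), if_neg hlt]
  -- membership of v in its star's leaf set
  have self_mem_Lf : ∀ v : V, v ∈ Lf (nb v) := fun v => mem_Lf.mpr (adj_nb v).symm
  -- R is mapped into R by σ R
  have R_stable : ∀ {v : V}, v ∈ R → σ R v ∈ R := by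
    intro v hv
    by_cases h : v ∈ A R ∪ B R
    · rcases Finset.mem_union.mp h with h' | h'
      · exact hBsub R (hσA R v h')
      · exact hAsub R (hσB R v h')
    · rw [hσfix R v h]; exact hv
  have sigma_sq_R : ∀ {v : V}, σ R (σ R v) = v ∨ σ R v = v := by
    intro v
    by_cases h : v ∈ A R ∪ B R
    · exact Or.inl (hσinv R v h)
    · exact Or.inr (hσfix R v h)
  have pi_inv : Function.Involutive π := by
    intro v
    by_cases hv : dg v = 1
    · by_cases hnv : 2 ≤ dg (nb v)
      · -- big-star leaf
        rw [pi_leaf hv hnv]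
        by_cases hm : v ∈ A (Lf (nb v)) ∪ B (Lf (nb v))
        · have hw : σ (Lf (nb v)) v ∈ Lf (nb v) := by
            rcases Finset.mem_union.mp hm with h' | h'
            · exact hBsub _ (hσA _ v h')
            · exact hAsub _ (hσB _ v h')
          obtain ⟨hdw, hnbw⟩ := Lf_leaf hnv hw
          rw [pi_leaf hdw (by rw [hnbw]; exact hnv), hnbw]
          exact hσinv _ v hm
        · rw [hσfix _ v hm, pi_leaf hv hnv, hσfix _ v hm]
      · have hnv1 : dg (nb v) = 1 := by have := dg_pos (nb v); omega
        by_cases hlt : v < nb v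
        · -- selected representative side
          rw [pi_R hv hnv1 hlt]
          have hvR : v ∈ R := mem_R.mpr ⟨hv, hnv1, hlt⟩
          have hwR : σ R v ∈ R := R_stable hvR
          obtain ⟨hdw, hnw, hltw⟩ := mem_R.mp hwR
          rw [pi_R hdw hnw hltw]
          rcases sigma_sq_R (v := v) with h | h
          · exact h
          · rw [h, h]
        · -- non-representative side of a 1-star
          have hnn : nb (nb v) = v := nb_nb hnv1
          have hur : nb v ∈ R := by
            refine mem_R.mpr ⟨hnv1, by rw [hnn]; exact hv, ?_⟩
            rw [hnn]
            rcases lt_trichotomy (nb v) v with h | h | h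
            · exact h
            · exact absurd h (nb_ne v)
            · exact absurd h hlt
          rw [pi_R' hv hnv1 hlt]
          set r' := σ R (nb v) with hr'
          have hr'R : r' ∈ R := R_stable hur
          obtain ⟨hdr', hnr', hltr'⟩ := mem_R.mp hr'R
          have hnnr' : nb (nb r') = r' := nb_nb hnr'
          rw [pi_R' hnr' (by rw [hnnr']; exact hdr') (by rw [hnnr']; exact fun h => absurd hltr' (asymm h)), hnnr']
          rcases sigma_sq_R (v := nb v) with h | h
          · have h2' : σ R r' = nb v := h
            rw [h2', hnn]
          · have hr2 : r' = nb v := h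
            rw [hr2, h, hnn]
    · rw [hπdef]
      simp only [if_neg hv]
  set Sel : Finset V := (C.biUnion fun c => A (Lf c)) ∪ A R with hSeldef
  have Sel_cases : ∀ {v : V}, v ∈ Sel → (∃ c ∈ C, v ∈ A (Lf c)) ∨ v ∈ A R := by
    intro v hv
    rcases Finset.mem_union.mp hv with h | h
    · obtain ⟨c, hc, hvc⟩ := Finset.mem_biUnion.mp h
      exact Or.inl ⟨c, hc, hvc⟩
    · exact Or.inr h
  have Sel_dg : ∀ {v : V}, v ∈ Sel → dg v = 1 := by
    intro v hv
    rcases Sel_cases hv with ⟨c, hc, hvc⟩ | h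
    · exact (Lf_leaf (mem_C.mp hc) (hAsub _ hvc)).1
    · exact (mem_R.mp (hAsub R h)).1
  set H₁ : SimpleGraph V := {
    Adj := fun u v => (u ∈ Sel ∧ v = nb u) ∨ (v ∈ Sel ∧ u = nb v)
    symm := ⟨fun u v h => by tauto⟩
    loopless := ⟨fun v h => by
      rcases h with ⟨_, h⟩ | ⟨_, h⟩ <;> exact nb_ne v h.symm⟩ } with hH1def
  set H₂ : SimpleGraph V := {
    Adj := fun u v => H₁.Adj (π u) (π v)
    symm := ⟨fun u v h => h.symm⟩
    loopless := ⟨fun v h => H₁.loopless.irrefl _ h⟩ } with hH2def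
  have hH1G : H₁ ≤ G := by
    intro u v h
    rcases h with ⟨_, h'⟩ | ⟨_, h'⟩
    · rw [h']; exact adj_nb u
    · rw [h']; exact (adj_nb v).symm
  have key : ∀ x ∈ Sel, G.Adj (π x) (π (nb x)) ∧ π x ∉ Sel ∧ π (nb x) ∉ Sel := by
    intro x hx
    rcases Sel_cases hx with ⟨c, hc, hxc⟩ | hxR
    · have hc2 : 2 ≤ dg c := mem_C.mp hc
      have hxLf : x ∈ Lf c := hAsub _ hxc
      obtain ⟨hdx, hnbx⟩ := Lf_leaf hc2 hxLf
      have hπx : π x = σ (Lf c) x := by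
        rw [pi_leaf hdx (by rw [hnbx]; exact hc2), hnbx]
      have hπxB : σ (Lf c) x ∈ B (Lf c) := hσA _ x hxc
      have hπxLf : σ (Lf c) x ∈ Lf c := hBsub _ hπxB
      obtain ⟨hdπx, hnbπx⟩ := Lf_leaf hc2 hπxLf
      have hπc : π (nb x) = c := by rw [hnbx]; exact pi_center hc2
      refine ⟨?_, ?_, ?_⟩
      · rw [hπx, hπc]; exact (mem_Lf.mp hπxLf).symm
      · rw [hπx]
        intro hcon
        rcases Sel_cases hcon with ⟨c', hc', hvc'⟩ | h
        · have hcc : nb (σ (Lf c) x) = c' := (Lf_leaf (mem_C.mp hc') (hAsub _ hvc')).2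
          rw [hnbπx] at hcc
          rw [← hcc] at hvc'
          exact Finset.disjoint_left.mp (hABdisj (Lf c)) hvc' hπxB
        · have hh := (mem_R.mp (hAsub R h)).2.1
          rw [hnbπx] at hh; omega
      · rw [hπc]
        intro hcon
        have := Sel_dg hcon; omega
    · have hxR' : x ∈ R := hAsub R hxR
      obtain ⟨hdx, hnx, hltx⟩ := mem_R.mp hxR'
      have hπx : π x = σ R x := pi_R hdx hnx hltx
      have hrB : σ R x ∈ B R := hσA R x hxR
      have hrR : σ R x ∈ R := hBsub R hrB
      obtain ⟨hdr, hnr, hltr⟩ := mem_R.mp hrR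
      have hnnx : nb (nb x) = x := nb_nb hnx
      have hπnb : π (nb x) = nb (σ R x) := by
        rw [pi_R' hnx (by rw [hnnx]; exact hdx)
          (by rw [hnnx]; exact fun h => absurd hltx (asymm h)), hnnx]
      refine ⟨?_, ?_, ?_⟩
      · rw [hπx, hπnb]; exact adj_nb _
      · rw [hπx]
        intro hcon
        rcases Sel_cases hcon with ⟨c', hc', hvc'⟩ | h
        · have hcc : nb (σ R x) = c' := (Lf_leaf (mem_C.mp hc') (hAsub _ hvc')).2
          have hc2 := mem_C.mp hc'
          rw [hcc] at hnr
          omega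
        · exact Finset.disjoint_left.mp (hABdisj R) h hrB
      · rw [hπnb]
        intro hcon
        have hnnr : nb (nb (σ R x)) = σ R x := nb_nb hnr
        rcases Sel_cases hcon with ⟨c', hc', hvc'⟩ | h
        · have h5 : nb (nb (σ R x)) = c' := (Lf_leaf (mem_C.mp hc') (hAsub _ hvc')).2
          rw [hnnr] at h5
          have := mem_C.mp hc'
          rw [h5] at hdr; omega
        · have hh := (mem_R.mp (hAsub R h)).2.2
          rw [hnnr] at hh
          exact absurd hltr (asymm hh)
  have keyAdj : ∀ {a b : V}, H₁.Adj a b → G.Adj (π a) (π b) := by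
    intro a b h
    rcases h with ⟨ha, hb'⟩ | ⟨hb, ha'⟩
    · rw [hb']; exact (key a ha).1
    · rw [ha']; exact ((key b hb).1).symm
  have hH2G : H₂ ≤ G := by
    intro u v h
    have h' : H₁.Adj (π u) (π v) := h
    have h'' := keyAdj h'
    rwa [pi_inv u, pi_inv v] at h''
  have keyNotAdj : ∀ {a b : V}, H₁.Adj a b → ¬ H₁.Adj (π a) (π b) := by
    have main : ∀ {x : V}, x ∈ Sel → ¬ H₁.Adj (π x) (π (nb x)) := by
      intro x hx hc
      obtain ⟨-, hn1, hn2⟩ := key x hx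
      rcases hc with ⟨h', -⟩ | ⟨h', -⟩
      · exact hn1 h'
      · exact hn2 h'
    intro a b h hcon
    rcases h with ⟨ha, hb'⟩ | ⟨hb, ha'⟩
    · rw [hb'] at hcon; exact main ha hcon
    · rw [ha'] at hcon; exact main hb hcon.symm
  have hdisj : Disjoint H₁.edgeSet H₂.edgeSet := by
    rw [Set.disjoint_left]
    intro e
    refine Sym2.ind (fun u v he1 he2 => ?_) e
    have h1' : H₁.Adj u v := he1
    have h2' : H₁.Adj (π u) (π v) := he2
    exact keyNotAdj h1' h2'
  have hiso : Nonempty (H₁ ≃g H₂) := by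
    refine ⟨⟨pi_inv.toPerm, ?_⟩⟩
    intro a b
    show H₂.Adj (π a) (π b) ↔ H₁.Adj a b
    constructor
    · intro h
      have h' : H₁.Adj (π (π a)) (π (π b)) := h
      rwa [pi_inv a, pi_inv b] at h'
    · intro h
      show H₁.Adj (π (π a)) (π (π b))
      rwa [pi_inv a, pi_inv b]
  have hE1 : H₁.edgeSet = (fun x => s(x, nb x)) '' (↑Sel : Set V) := by
    ext e
    refine Sym2.ind (fun u v => ?_) e
    simp only [SimpleGraph.mem_edgeSet, Set.mem_image, Finset.mem_coe]
    constructor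
    · intro h
      rcases h with ⟨hu, hv⟩ | ⟨hv, hu⟩
      · exact ⟨u, hu, by rw [hv]⟩
      · exact ⟨v, hv, by rw [hu]; exact Sym2.eq_swap⟩
    · rintro ⟨x, hx, hxe⟩
      rcases Sym2.eq_iff.mp hxe with ⟨h1', h2'⟩ | ⟨h1', h2'⟩
      · exact Or.inl ⟨h1' ▸ hx, by rw [← h2', h1']⟩
      · exact Or.inr ⟨h1' ▸ hx, by rw [← h2', h1']⟩
    -- end
  have hinj : Set.InjOn (fun x => s(x, nb x)) ↑Sel := by
    intro x hx y hy hxy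
    simp only at hxy
    rcases Sym2.eq_iff.mp hxy with ⟨h1', h2'⟩ | ⟨h1', h2'⟩
    · exact h1'
    · exfalso
      have hx' : x ∈ Sel := hx
      have hy' : y ∈ Sel := hy
      have hdx := Sel_dg hx'
      rcases Sel_cases hy' with ⟨c, hc, hyc⟩ | hyR
      · have hnyc := (Lf_leaf (mem_C.mp hc) (hAsub _ hyc)).2
        have hc2 := mem_C.mp hc
        have : dg x = dg c := by rw [h1', hnyc]
        omega
      · obtain ⟨hdy, hny, hlty⟩ := mem_R.mp (hAsub R hyR)
        have hnx1 : dg (nb x) = 1 := by rw [h2']; exact hdy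
        rcases Sel_cases hx' with ⟨c', hc', hxc'⟩ | hxR
        · have hnxc := (Lf_leaf (mem_C.mp hc') (hAsub _ hxc')).2
          have hc2' := mem_C.mp hc'
          rw [hnxc] at hnx1; omega
        · obtain ⟨hdx', hnx', hltx⟩ := mem_R.mp (hAsub R hxR)
          rw [h2'] at hltx
          rw [h1'] at hltx
          exact absurd hlty (asymm hltx)
  have hE2 : H₂.edgeSet = Sym2.map π '' H₁.edgeSet := by
    ext e
    refine Sym2.ind (fun u v => ?_) e
    constructor
    · intro h
      have h' : H₁.Adj (π u) (π v) := h
      refine ⟨s(π u, π v), h', ?_⟩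
      rw [Sym2.map_pair_eq, pi_inv u, pi_inv v]
    · rintro ⟨e', he', hee⟩
      revert he' hee
      refine Sym2.ind (fun a b he' hee => ?_) e'
      rw [Sym2.map_pair_eq] at hee
      rcases Sym2.eq_iff.mp hee with ⟨h1', h2'⟩ | ⟨h1', h2'⟩
      · show H₁.Adj (π u) (π v)
        rw [← h1', ← h2', pi_inv a, pi_inv b]; exact he'
      · show H₁.Adj (π u) (π v)
        rw [← h1', ← h2', pi_inv a, pi_inv b]; exact he'.symm
  have hcard1 : H₁.edgeSet.ncard = Sel.card := by
    rw [hE1, Set.ncard_image_of_injOn hinj, Set.ncard_coe_finset]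
  have hcard2 : H₂.edgeSet.ncard = Sel.card := by
    rw [hE2, Set.ncard_image_of_injective _ (Sym2.map.injective pi_inv.injective), hcard1]
  have cover : (Finset.univ : Finset V) ⊆ (C.biUnion fun c => Lf c) ∪ C ∪ S1 := by
    intro v _
    simp only [Finset.mem_union, Finset.mem_biUnion]
    by_cases hv : 2 ≤ dg v
    · exact Or.inl (Or.inr (mem_C.mpr hv))
    · have hv1 : dg v = 1 := by have := dg_pos v; omega
      by_cases hn : 2 ≤ dg (nb v)
      · exact Or.inl (Or.inl ⟨nb v, mem_C.mpr hn, self_mem_Lf v⟩)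
      · exact Or.inr (mem_S1.mpr ⟨hv1, by have := dg_pos (nb v); omega⟩)
  have hS1card : S1.card ≤ 2 * R.card := by
    have hsub : S1 ⊆ R ∪ R.image nb := by
      intro v hv
      obtain ⟨hv1, hn1⟩ := mem_S1.mp hv
      rcases lt_trichotomy v (nb v) with h | h | h
      · exact Finset.mem_union_left _ (mem_R.mpr ⟨hv1, hn1, h⟩)
      · exact absurd h.symm (nb_ne v)
      · refine Finset.mem_union_right _ (Finset.mem_image.mpr ⟨nb v, ?_, nb_nb hn1⟩)
        exact mem_R.mpr ⟨hn1, by rw [nb_nb hn1]; exact hv1, by rw [nb_nb hn1]; exact h⟩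
    calc S1.card ≤ (R ∪ R.image nb).card := Finset.card_le_card hsub
    _ ≤ R.card + (R.image nb).card := Finset.card_union_le _ _
    _ ≤ R.card + R.card := Nat.add_le_add_left Finset.card_image_le _
    _ = 2 * R.card := by ring
  have hSelcard : Sel.card = (∑ c ∈ C, (A (Lf c)).card) + (A R).card := by
    rw [hSeldef, Finset.card_union_of_disjoint ?d1, Finset.card_biUnion ?d2]
    case d1 =>
      rw [Finset.disjoint_left]
      intro v hv hvR
      obtain ⟨c, hc, hvc⟩ := Finset.mem_biUnion.mp hv
      have h1' := (Lf_leaf (mem_C.mp hc) (hAsub _ hvc)).2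
      have h2' := (mem_R.mp (hAsub R hvR)).2.1
      rw [h1'] at h2'
      have := mem_C.mp hc; omega
    case d2 =>
      intro c hc c' hc' hne
      rw [Function.onFun, Finset.disjoint_left]
      intro v hv hv'
      have e1 := (Lf_leaf (mem_C.mp hc) (hAsub _ hv)).2
      have e2 := (Lf_leaf (mem_C.mp hc') (hAsub _ hv')).2
      exact hne (by rw [← e1, ← e2])
  have huniv : Fintype.card V ≤ 4 * Sel.card + 2 := by
    have hle : Fintype.card V ≤ (∑ c ∈ C, (Lf c).card) + C.card + S1.card := by
      calc Fintype.card V = (Finset.univ : Finset V).card := (Finset.card_univ).symm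
      _ ≤ ((C.biUnion fun c => Lf c) ∪ C ∪ S1).card := Finset.card_le_card cover
      _ ≤ ((C.biUnion fun c => Lf c) ∪ C).card + S1.card := Finset.card_union_le _ _
      _ ≤ ((C.biUnion fun c => Lf c).card + C.card) + S1.card := by
          gcongr; exact Finset.card_union_le _ _
      _ ≤ (∑ c ∈ C, (Lf c).card) + C.card + S1.card := by
          gcongr; exact Finset.card_biUnion_le
    have hsum : (∑ c ∈ C, (Lf c).card) + C.card ≤ 4 * ∑ c ∈ C, ((Lf c).card / 2) := by
      have e1 : (∑ c ∈ C, ((Lf c).card + 1)) = (∑ c ∈ C, (Lf c).card) + C.card := by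
        rw [Finset.sum_add_distrib, Finset.sum_const, smul_eq_mul, mul_one]
      have e2 : ∑ c ∈ C, ((Lf c).card + 1) ≤ ∑ c ∈ C, 4 * ((Lf c).card / 2) :=
        Finset.sum_le_sum fun c hc => by
          have h2c : 2 ≤ (Lf c).card := by rw [Lf_card]; exact mem_C.mp hc
          omega
      have e3 : (∑ c ∈ C, 4 * ((Lf c).card / 2)) = 4 * ∑ c ∈ C, ((Lf c).card / 2) := by
        rw [Finset.mul_sum]
      omega
    have hSel2 : Sel.card = (∑ c ∈ C, ((Lf c).card / 2)) + R.card / 2 := by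
      rw [hSelcard, hAcard R]
      congr 1
      exact Finset.sum_congr rfl fun c _ => hAcard (Lf c)
    omega
  refine ⟨H₁, H₂, hH1G, hH2G, hdisj, hiso, ?_, ?_⟩
  · rw [hcard1]
    rw [div_le_iff₀ (by norm_num : (0:ℝ) < 4)]
    have hc' : (Fintype.card V : ℝ) ≤ 4 * Sel.card + 2 := by exact_mod_cast huniv
    linarith
  · rw [hcard2]
    rw [div_le_iff₀ (by norm_num : (0:ℝ) < 4)]
    have hc' : (Fintype.card V : ℝ) ≤ 4 * Sel.card + 2 := by exact_mod_cast huniv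
    linarith
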